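/- arXiv:1305.2982 — 6 statements merged into one kernel-verified Lean document; each statement's English description precedes it below -/
import Mathlib

section
/- Let (Ω, P) be a probability space, let z : Ω → ℝ be uniformly distributed on [0,1], let a ∈ ℝ, σ(a) = 1/(1 + exp(−a)), and h = 1_{z < σ(a)}. Let L₁, L₀ : Ω → ℝ be integrable random variables (the losses when the neuron outputs 1 and 0 respectively) each independent of z, and set L = h·L₁ + (1 − h)·L₀. Then E[(h − σ(a))·L] = σ(a)(1 − σ(a))·(E[L₁] − E[L₀]). -/
open MeasureTheory ProbabilityTheory

/-- The logistic sigmoid `σ(a) = 1/(1 + exp(−a))`. -/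
noncomputable def sigmoid (a : ℝ) : ℝ := 1 / (1 + Real.exp (-a))

lemma sigmoid_pos (a : ℝ) : 0 < sigmoid a := by
  unfold sigmoid
  positivity

lemma sigmoid_lt_one (a : ℝ) : sigmoid a < 1 := by
  unfold sigmoid
  rw [div_lt_one (by positivity)]
  linarith [Real.exp_pos (-a)]

/-- With `z` uniform on `[0,1]`, `h = 1_{z < σ(a)}`, and `L₁, L₀`
integrable losses independent of `z`, letting `L = h·L₁ + (1 − h)·L₀`, the
estimator satisfies `E[(h − σ(a))·L] = σ(a)(1 − σ(a))·(E[L₁] − E[L₀])`. -/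
theorem stmt1 {Ω : Type*} [MeasurableSpace Ω] (μ : Measure Ω) [IsProbabilityMeasure μ]
    (z : Ω → ℝ) (hz : Measurable z)
    (hunif : Measure.map z μ = volume.restrict (Set.Icc (0 : ℝ) 1))
    (a : ℝ) (h : Ω → ℝ) (hh : h = fun ω => if z ω < sigmoid a then 1 else 0)
    (L₁ L₀ : Ω → ℝ) (hL₁ : Integrable L₁ μ) (hL₀ : Integrable L₀ μ)
    (hind₁ : IndepFun L₁ z μ) (hind₀ : IndepFun L₀ z μ)
    (L : Ω → ℝ) (hL : L = fun ω => h ω * L₁ ω + (1 - h ω) * L₀ ω) :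
    (∫ ω, (h ω - sigmoid a) * L ω ∂μ)
      = sigmoid a * (1 - sigmoid a) * ((∫ ω, L₁ ω ∂μ) - ∫ ω, L₀ ω ∂μ) := by
  set s := sigmoid a with hs
  have hs0 : 0 < s := sigmoid_pos a
  have hs1 : s < 1 := sigmoid_lt_one a
  -- h as composition
  have hf : Measurable (fun x : ℝ => if x < s then (1:ℝ) else 0) :=
    Measurable.ite measurableSet_Iio measurable_const measurable_const
  have hg : Measurable (fun x : ℝ => if x < s then (0:ℝ) else 1) :=
    Measurable.ite measurableSet_Iio measurable_const measurable_const
  have hhz : h = (fun x : ℝ => if x < s then (1:ℝ) else 0) ∘ z := by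
    funext ω; simp [hh]
  have hmh : Measurable h := by rw [hhz]; exact hf.comp hz
  have hone : (fun ω => 1 - h ω) = (fun x : ℝ => if x < s then (0:ℝ) else 1) ∘ z := by
    funext ω; simp [hh]; split <;> norm_num
  -- independence
  have hind₁' : IndepFun h L₁ μ := by
    rw [hhz]
    exact (hind₁.symm.comp hf measurable_id)
  have hind₀' : IndepFun (fun ω => 1 - h ω) L₀ μ := by
    rw [hone]
    exact (hind₀.symm.comp hg measurable_id)
  -- h is an indicator
  have hbd : ∀ ω, h ω = 0 ∨ h ω = 1 := by
    intro ω; simp only [hh]; split <;> simp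
  -- ∫ h = s
  have hinth : ∫ ω, h ω ∂μ = s := by
    have : ∫ ω, h ω ∂μ = ∫ x, (if x < s then (1:ℝ) else 0) ∂(Measure.map z μ) := by
      rw [integral_map hz.aemeasurable hf.aestronglyMeasurable, hhz]
      rfl
    rw [this, hunif]
    have heq : (fun x : ℝ => if x < s then (1:ℝ) else 0)
        = Set.indicator (Set.Iio s) (fun _ => (1:ℝ)) := by
      funext x; simp [Set.indicator_apply, Set.mem_Iio]
    rw [heq, integral_indicator measurableSet_Iio]
    rw [Measure.restrict_restrict measurableSet_Iio]
    have : Set.Iio s ∩ Set.Icc (0:ℝ) 1 = Set.Ico 0 s := by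
      ext x
      simp only [Set.mem_inter_iff, Set.mem_Iio, Set.mem_Icc, Set.mem_Ico]
      constructor
      · rintro ⟨h1, h2, h3⟩; exact ⟨h2, h1⟩
      · rintro ⟨h1, h2⟩; exact ⟨h2, h1, le_of_lt (h2.trans hs1)⟩
    rw [this]
    simp [Real.volume_Ico, hs0.le]
  -- integrability of h*L₁ and (1-h)*L₀
  have hintL1 : Integrable (fun ω => h ω * L₁ ω) μ := by
    apply hL₁.bdd_mul (c := 1) hmh.aestronglyMeasurable
    · filter_upwards with ω
      rcases hbd ω with h0 | h0 <;> simp [h0]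
  have hintL0 : Integrable (fun ω => (1 - h ω) * L₀ ω) μ := by
    apply hL₀.bdd_mul (c := 1) ((measurable_const.sub hmh).aestronglyMeasurable)
    · filter_upwards with ω
      rcases hbd ω with h0 | h0 <;> simp [h0]
  -- independence factorization
  have hfac1 : ∫ ω, h ω * L₁ ω ∂μ = s * ∫ ω, L₁ ω ∂μ := by
    have := hind₁'.integral_mul_eq_mul_integral hmh.aestronglyMeasurable hL₁.aestronglyMeasurable
    simpa [hinth, Pi.mul_apply] using this
  have hfac0 : ∫ ω, (1 - h ω) * L₀ ω ∂μ = (1 - s) * ∫ ω, L₀ ω ∂μ := by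
    have := hind₀'.integral_mul_eq_mul_integral ((measurable_const.sub hmh).aestronglyMeasurable)
      hL₀.aestronglyMeasurable
    have hint1h : ∫ ω, (1 - h ω) ∂μ = 1 - s := by
      rw [integral_sub (integrable_const 1) ⟨hmh.aestronglyMeasurable, by
        apply HasFiniteIntegral.mono' (integrable_const (1:ℝ)).hasFiniteIntegral
        filter_upwards with ω; rcases hbd ω with h0 | h0 <;> simp [h0]⟩]
      simp [hinth]
    simpa [hint1h, Pi.mul_apply] using this
  -- rewrite integrand
  have hint : (fun ω => (h ω - s) * L ω)
      = fun ω => (1 - s) * (h ω * L₁ ω) - s * ((1 - h ω) * L₀ ω) := by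
    funext ω
    rcases hbd ω with h0 | h0 <;> rw [hL] <;> simp only [h0] <;> ring
  rw [hint, integral_sub ((hintL1.const_mul _)) ((hintL0.const_mul _)),
    integral_const_mul, integral_const_mul, hfac1, hfac0]
  ring
end

section
/- Let (Ω, P) be a probability space, let z : Ω → ℝ be uniformly distributed on [0,1], let σ(a) = 1/(1 + exp(−a)), and for each a ∈ ℝ let hₐ = 1_{z < σ(a)}. Let L₁, L₀ : Ω → ℝ be integrable random variables each independent of z, and let F(a) = E[hₐ·L₁ + (1 − hₐ)·L₀] be the expected loss as a function of the activation a. Then F is differentiable at every a, and F'(a) = E[(hₐ − σ(a))·(hₐ·L₁ + (1 − hₐ)·L₀)]; that is, the estimator (h − σ(a))·L is an unbiased estimator of the derivative of the expected loss with respect to the activation a. -/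
open MeasureTheory ProbabilityTheory

lemma hasDerivAt_sigmoid (a : ℝ) :
    HasDerivAt sigmoid (sigmoid a * (1 - sigmoid a)) a := by
  have hne : (1 + Real.exp (-a)) ≠ 0 := by positivity
  have h1 : HasDerivAt (fun x : ℝ => 1 + Real.exp (-x)) (-Real.exp (-a)) a := by
    have := (Real.hasDerivAt_exp (-a)).comp a (hasDerivAt_neg a)
    simpa using (this.const_add 1)
  have h2 := h1.inv hne
  have : HasDerivAt sigmoid (Real.exp (-a) / (1 + Real.exp (-a)) ^ 2) a := by
    have he : (fun x : ℝ => (1 + Real.exp (-x))⁻¹) = sigmoid := by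
      funext x; simp [sigmoid, one_div]
    rw [← he]
    exact h2.congr_deriv (by ring)
  convert this using 1
  unfold sigmoid
  field_simp
  ring

/-- With `z` uniform on `[0,1]`, `hₐ = 1_{z < σ(a)}` for each activation `a`,
and `L₁, L₀` integrable losses independent of `z`, the expected loss
`F(a) = E[hₐ·L₁ + (1 − hₐ)·L₀]` is differentiable at every `a` with
`F'(a) = E[(hₐ − σ(a))·(hₐ·L₁ + (1 − hₐ)·L₀)]`: the estimator `(h − σ(a))·L` is an
unbiased estimator of the derivative of the expected loss w.r.t. the activation. -/
theorem stmt2 {Ω : Type*} [MeasurableSpace Ω] (μ : Measure Ω) [IsProbabilityMeasure μ]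
    (z : Ω → ℝ) (hz : Measurable z)
    (hunif : Measure.map z μ = volume.restrict (Set.Icc (0 : ℝ) 1))
    (h : ℝ → Ω → ℝ) (hh : h = fun a ω => if z ω < sigmoid a then 1 else 0)
    (L₁ L₀ : Ω → ℝ) (hL₁ : Integrable L₁ μ) (hL₀ : Integrable L₀ μ)
    (hind₁ : IndepFun L₁ z μ) (hind₀ : IndepFun L₀ z μ)
    (F : ℝ → ℝ) (hF : F = fun a => ∫ ω, h a ω * L₁ ω + (1 - h a ω) * L₀ ω ∂μ) :
    ∀ a : ℝ, HasDerivAt F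
      (∫ ω, (h a ω - sigmoid a) * (h a ω * L₁ ω + (1 - h a ω) * L₀ ω) ∂μ) a := by
  subst hh
  set E₁ := ∫ ω, L₁ ω ∂μ with hE₁
  set E₀ := ∫ ω, L₀ ω ∂μ with hE₀
  -- measurability of the indicator function on ℝ
  have hφ : ∀ b : ℝ, Measurable (fun x : ℝ => if x < sigmoid b then (1 : ℝ) else 0) := by
    intro b
    exact Measurable.ite measurableSet_Iio measurable_const measurable_const
  have hmeas : ∀ b : ℝ, Measurable (fun ω => if z ω < sigmoid b then (1 : ℝ) else 0) :=
    fun b => (hφ b).comp hz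
  -- the mean of the indicator is sigmoid b
  have hmean : ∀ b : ℝ, ∫ ω, (if z ω < sigmoid b then (1 : ℝ) else 0) ∂μ = sigmoid b := by
    intro b
    have hset : MeasurableSet (z ⁻¹' Set.Iio (sigmoid b)) := hz measurableSet_Iio
    have heq : (fun ω => if z ω < sigmoid b then (1 : ℝ) else 0)
        = (z ⁻¹' Set.Iio (sigmoid b)).indicator (fun _ => (1 : ℝ)) := by
      funext ω
      by_cases hc : z ω < sigmoid b <;> simp [Set.indicator_apply, Set.mem_Iio, hc]
    have hμ : μ (z ⁻¹' Set.Iio (sigmoid b)) = ENNReal.ofReal (sigmoid b) := by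
      rw [← Measure.map_apply hz measurableSet_Iio, hunif,
        Measure.restrict_apply measurableSet_Iio]
      have hint : Set.Iio (sigmoid b) ∩ Set.Icc 0 1 = Set.Ico 0 (sigmoid b) := by
        ext x
        simp only [Set.mem_inter_iff, Set.mem_Iio, Set.mem_Icc, Set.mem_Ico]
        constructor
        · rintro ⟨h1, h2, _⟩; exact ⟨h2, h1⟩
        · rintro ⟨h1, h2⟩
          exact ⟨h2, h1, h2.le.trans (sigmoid_lt_one b).le⟩
      rw [hint, Real.volume_Ico]
      norm_num
    rw [heq, integral_indicator_const _ hset, measureReal_def, hμ,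
      ENNReal.toReal_ofReal (sigmoid_pos b).le, smul_eq_mul, mul_one]
  -- independence of the indicator and the losses
  have hindh : ∀ (b : ℝ) (L : Ω → ℝ), IndepFun L z μ →
      IndepFun (fun ω => if z ω < sigmoid b then (1 : ℝ) else 0) L μ := by
    intro b L hLz
    exact hLz.symm.comp (hφ b) measurable_id
  -- integrability of the indicator and its complement
  have hinth : ∀ b : ℝ, Integrable (fun ω => if z ω < sigmoid b then (1 : ℝ) else 0) μ := by
    intro b
    refine (integrable_const (1 : ℝ)).mono' (hmeas b).aestronglyMeasurable ?_
    filter_upwards with ω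
    by_cases hc : z ω < sigmoid b <;> simp [hc]
  -- first product integral
  have hmul₁ : ∀ b : ℝ,
      ∫ ω, (if z ω < sigmoid b then (1 : ℝ) else 0) * L₁ ω ∂μ = sigmoid b * E₁ := by
    intro b
    have h2 : (∫ ω, (if z ω < sigmoid b then (1 : ℝ) else 0) * L₁ ω ∂μ)
        = (∫ ω, (if z ω < sigmoid b then (1 : ℝ) else 0) ∂μ) * E₁ :=
      (hindh b L₁ hind₁).integral_fun_mul_eq_mul_integral (hinth b).1 hL₁.1
    rw [hmean b] at h2
    exact h2
  -- second product integral
  have hmul₀ : ∀ b : ℝ,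
      ∫ ω, (1 - (if z ω < sigmoid b then (1 : ℝ) else 0)) * L₀ ω ∂μ
        = (1 - sigmoid b) * E₀ := by
    intro b
    have hind' : IndepFun (fun ω => 1 - (if z ω < sigmoid b then (1 : ℝ) else 0)) L₀ μ := by
      have hψ : Measurable (fun x : ℝ => 1 - (if x < sigmoid b then (1 : ℝ) else 0)) :=
        measurable_const.sub (hφ b)
      exact hind₀.symm.comp hψ measurable_id
    have hint' : Integrable (fun ω => 1 - (if z ω < sigmoid b then (1 : ℝ) else 0)) μ :=
      (integrable_const (1 : ℝ)).sub (hinth b)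
    have hm : ∫ ω, (1 - (if z ω < sigmoid b then (1 : ℝ) else 0)) ∂μ = 1 - sigmoid b := by
      rw [integral_sub (integrable_const 1) (hinth b), hmean b, integral_const]
      simp
    have h2 : (∫ ω, (1 - (if z ω < sigmoid b then (1 : ℝ) else 0)) * L₀ ω ∂μ)
        = (∫ ω, (1 - (if z ω < sigmoid b then (1 : ℝ) else 0)) ∂μ) * E₀ :=
      hind'.integral_fun_mul_eq_mul_integral hint'.1 hL₀.1
    rw [hm] at h2
    exact h2
  -- integrability of products
  have hintmul₁ : ∀ b : ℝ,
      Integrable (fun ω => (if z ω < sigmoid b then (1 : ℝ) else 0) * L₁ ω) μ := by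
    intro b
    exact (hindh b L₁ hind₁).integrable_mul (hinth b) hL₁
  have hintmul₀ : ∀ b : ℝ,
      Integrable (fun ω => (1 - (if z ω < sigmoid b then (1 : ℝ) else 0)) * L₀ ω) μ := by
    intro b
    have hind' : IndepFun (fun ω => 1 - (if z ω < sigmoid b then (1 : ℝ) else 0)) L₀ μ := by
      exact hind₀.symm.comp (measurable_const.sub (hφ b)) measurable_id
    have hint' : Integrable (fun ω => 1 - (if z ω < sigmoid b then (1 : ℝ) else 0)) μ :=
      (integrable_const (1 : ℝ)).sub (hinth b)
    exact hind'.integrable_mul hint' hL₀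
  -- closed form for F
  have hFeq : F = fun b => sigmoid b * E₁ + (1 - sigmoid b) * E₀ := by
    rw [hF]
    funext b
    rw [integral_add (hintmul₁ b) (hintmul₀ b), hmul₁ b, hmul₀ b]
  intro a
  -- value of the gradient estimator integral
  have hpt : ∀ ω, ((if z ω < sigmoid a then (1 : ℝ) else 0) - sigmoid a) *
      ((if z ω < sigmoid a then (1 : ℝ) else 0) * L₁ ω
        + (1 - (if z ω < sigmoid a then (1 : ℝ) else 0)) * L₀ ω)
      = (1 - sigmoid a) * ((if z ω < sigmoid a then (1 : ℝ) else 0) * L₁ ω)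
        - sigmoid a * ((1 - (if z ω < sigmoid a then (1 : ℝ) else 0)) * L₀ ω) := by
    intro ω
    by_cases hc : z ω < sigmoid a <;> simp [hc]
  have hval : (∫ ω, ((if z ω < sigmoid a then (1 : ℝ) else 0) - sigmoid a) *
      ((if z ω < sigmoid a then (1 : ℝ) else 0) * L₁ ω
        + (1 - (if z ω < sigmoid a then (1 : ℝ) else 0)) * L₀ ω) ∂μ)
      = (1 - sigmoid a) * (sigmoid a * E₁) - sigmoid a * ((1 - sigmoid a) * E₀) := by
    simp_rw [hpt]
    rw [integral_sub ((hintmul₁ a).const_mul _) ((hintmul₀ a).const_mul _),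
      integral_const_mul, integral_const_mul, hmul₁ a, hmul₀ a]
  rw [hval, hFeq]
  have hσ := hasDerivAt_sigmoid a
  have hD := (hσ.mul_const E₁).add (((hasDerivAt_const a (1 : ℝ)).sub hσ).mul_const E₀)
  convert hD using 1
  · rfl
  · rfl
  · rfl
  · ring
end

section
/- Let (Ω, P) be a probability space, let z : Ω → ℝ be uniformly distributed on [0,1], let a ∈ ℝ, σ(a) = 1/(1 + exp(−a)), and h = 1_{z < σ(a)}. Let L₁, L₀ : Ω → ℝ be integrable random variables each independent of z, and set L = h·L₁ + (1 − h)·L₀. Then for every constant L̄ ∈ ℝ, the centered estimator satisfies E[(h − σ(a))·(L − L̄)] = E[(h − σ(a))·L] = σ(a)(1 − σ(a))·(E[L₁] − E[L₀]); in particular, the centered estimator is also an unbiased estimator of the derivative of the expected loss with respect to the activation a. -/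
open MeasureTheory ProbabilityTheory

/-- With `z` uniform on `[0,1]`, `h = 1_{z < σ(a)}`, and integrable losses
`L₁, L₀` independent of `z`, `L = h·L₁ + (1 − h)·L₀`, the centered estimator satisfies,
for every constant `L̄`,
`E[(h − σ(a))·(L − L̄)] = E[(h − σ(a))·L] = σ(a)(1 − σ(a))·(E[L₁] − E[L₀])`. -/
theorem stmt4 {Ω : Type*} [MeasurableSpace Ω] (μ : Measure Ω) [IsProbabilityMeasure μ]
    (z : Ω → ℝ) (hz : Measurable z)
    (hunif : Measure.map z μ = volume.restrict (Set.Icc (0 : ℝ) 1))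
    (a : ℝ) (h : Ω → ℝ) (hh : h = fun ω => if z ω < sigmoid a then 1 else 0)
    (L₁ L₀ : Ω → ℝ) (hL₁ : Integrable L₁ μ) (hL₀ : Integrable L₀ μ)
    (hind₁ : IndepFun L₁ z μ) (hind₀ : IndepFun L₀ z μ)
    (L : Ω → ℝ) (hL : L = fun ω => h ω * L₁ ω + (1 - h ω) * L₀ ω) :
    ∀ Lbar : ℝ,
      (∫ ω, (h ω - sigmoid a) * (L ω - Lbar) ∂μ)
          = (∫ ω, (h ω - sigmoid a) * L ω ∂μ) ∧
      (∫ ω, (h ω - sigmoid a) * L ω ∂μ)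
          = sigmoid a * (1 - sigmoid a) * ((∫ ω, L₁ ω ∂μ) - ∫ ω, L₀ ω ∂μ) := by
  set s := sigmoid a with hs
  have hs0 : 0 < s := sigmoid_pos a
  have hs1 : s < 1 := sigmoid_lt_one a
  -- f is the indicator function on ℝ
  set f : ℝ → ℝ := fun x => if x < s then 1 else 0 with hf
  have hfm : Measurable f := by
    apply Measurable.ite (measurableSet_lt measurable_id measurable_const) <;> measurability
  have hhz : h = f ∘ z := by rw [hh]; rfl
  have hhm : Measurable h := by rw [hhz]; exact hfm.comp hz
  -- h is the indicator of the set A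
  have hA : MeasurableSet {ω | z ω < s} := measurableSet_lt hz measurable_const
  have hhind : h = Set.indicator {ω | z ω < s} (fun _ => (1:ℝ)) := by
    rw [hh]; funext ω; simp [Set.indicator_apply, Set.mem_setOf_eq]
  -- measure of the set
  have hmeas : μ {ω | z ω < s} = ENNReal.ofReal s := by
    have : {ω | z ω < s} = z ⁻¹' (Set.Iio s) := rfl
    rw [this, ← Measure.map_apply hz measurableSet_Iio, hunif,
      Measure.restrict_apply measurableSet_Iio]
    have : Set.Iio s ∩ Set.Icc (0:ℝ) 1 = Set.Ico 0 s := by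
      ext x; simp [Set.mem_Iio, Set.mem_Icc, Set.mem_Ico]
      constructor
      · rintro ⟨h1, h2, _⟩; exact ⟨h2, h1⟩
      · rintro ⟨h1, h2⟩; exact ⟨h2, h1, by linarith⟩
    rw [this, Real.volume_Ico]
    simp
  -- expectation of h
  have hEh : ∫ ω, h ω ∂μ = s := by
    rw [hhind, integral_indicator hA]
    simp [measureReal_def, hmeas, ENNReal.toReal_ofReal hs0.le]
  have hhInt : Integrable h μ := by
    rw [hhind]
    exact (integrable_const (1:ℝ)).indicator hA
  -- independence of h and L₁, (1 - h) and L₀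
  have hind₁' : IndepFun L₁ h μ := by
    rw [hhz]; exact hind₁.comp measurable_id hfm
  have hind₀' : IndepFun L₀ (fun ω => 1 - h ω) μ := by
    rw [hhz]
    exact hind₀.comp measurable_id ((measurable_const.sub hfm))
  -- integrability of products
  have hIntHL₁ : Integrable (fun ω => h ω * L₁ ω) μ := by
    have := hind₁'.symm.integrable_mul hhInt hL₁
    exact this
  have hInt1hL₀ : Integrable (fun ω => (1 - h ω) * L₀ ω) μ := by
    have := hind₀'.symm.integrable_mul ((integrable_const (1:ℝ)).sub hhInt) hL₀
    exact this
  -- product expectations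
  have hE1 : ∫ ω, h ω * L₁ ω ∂μ = s * ∫ ω, L₁ ω ∂μ := by
    have := hind₁'.symm.integral_mul_eq_mul_integral hhInt.aestronglyMeasurable hL₁.aestronglyMeasurable
    simpa [Pi.mul_apply, hEh] using this
  have hE0 : ∫ ω, (1 - h ω) * L₀ ω ∂μ = (1 - s) * ∫ ω, L₀ ω ∂μ := by
    have := hind₀'.symm.integral_mul_eq_mul_integral
      ((integrable_const (1:ℝ)).sub hhInt).aestronglyMeasurable hL₀.aestronglyMeasurable
    have h1h : ∫ ω, (1 - h ω) ∂μ = 1 - s := by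
      rw [integral_sub (integrable_const 1) hhInt, hEh]
      simp
    simpa [Pi.mul_apply, Pi.sub_apply, h1h] using this
  -- key pointwise identity: (h - s) * L = (1-s) * (h * L₁) - s * ((1-h) * L₀)
  have hsq : ∀ ω, h ω * h ω = h ω := by
    intro ω; rw [hh]; by_cases hc : z ω < s <;> simp [hc]
  have hkey : (fun ω => (h ω - s) * L ω)
      = fun ω => (1 - s) * (h ω * L₁ ω) - s * ((1 - h ω) * L₀ ω) := by
    funext ω
    rw [hL]
    linear_combination (L₁ ω - L₀ ω) * hsq ω
  have hIntC : Integrable (fun ω => (h ω - s) * L ω) μ := by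
    rw [hkey]
    exact (hIntHL₁.const_mul _).sub (hInt1hL₀.const_mul _)
  have hMain : (∫ ω, (h ω - s) * L ω ∂μ)
      = s * (1 - s) * ((∫ ω, L₁ ω ∂μ) - ∫ ω, L₀ ω ∂μ) := by
    rw [hkey, integral_sub (hIntHL₁.const_mul _) (hInt1hL₀.const_mul _),
      integral_const_mul, integral_const_mul, hE1, hE0]
    ring
  intro Lbar
  refine ⟨?_, hMain⟩
  have hexp : (fun ω => (h ω - s) * (L ω - Lbar))
      = fun ω => (h ω - s) * L ω - Lbar * (h ω - s) := by
    funext ω; ring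
  have hIntHs : Integrable (fun ω => Lbar * (h ω - s)) μ :=
    ((hhInt.sub (integrable_const s)).const_mul _)
  rw [hexp, integral_sub hIntC hIntHs, integral_const_mul,
    integral_sub hhInt (integrable_const s), hEh]
  simp
end

section
/- Let (Ω, P) be a probability space, let z : Ω → ℝ be uniformly distributed on [0,1], let a ∈ ℝ, σ(a) = 1/(1 + exp(−a)), and h = 1_{z < σ(a)}. Let L₁, L₀ : Ω → ℝ be square-integrable random variables each independent of z, set L = h·L₁ + (1 − h)·L₀, and assume E[(h − σ(a))²] > 0. Then among all constants L̄ ∈ ℝ, the variance Var[(h − σ(a))·(L − L̄)] of the centered estimator is minimized at L̄ = E[(h − σ(a))²·L] / E[(h − σ(a))²]. -/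
open MeasureTheory ProbabilityTheory

/-- With `z` uniform on `[0,1]`, `h = 1_{z < σ(a)}`, square-integrable
losses `L₁, L₀` independent of `z`, `L = h·L₁ + (1 − h)·L₀`, and
`E[(h − σ(a))²] > 0`, the variance `Var[(h − σ(a))·(L − L̄)]` of the centered
estimator is minimized over constants `L̄` at
`L̄ = E[(h − σ(a))²·L] / E[(h − σ(a))²]`. -/
theorem stmt7 {Ω : Type*} [MeasurableSpace Ω] (μ : Measure Ω) [IsProbabilityMeasure μ]
    (z : Ω → ℝ) (hz : Measurable z)
    (hunif : Measure.map z μ = volume.restrict (Set.Icc (0 : ℝ) 1))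
    (a : ℝ) (h : Ω → ℝ) (hh : h = fun ω => if z ω < sigmoid a then 1 else 0)
    (L₁ L₀ : Ω → ℝ) (hL₁ : MemLp L₁ 2 μ) (hL₀ : MemLp L₀ 2 μ)
    (hind₁ : IndepFun L₁ z μ) (hind₀ : IndepFun L₀ z μ)
    (L : Ω → ℝ) (hL : L = fun ω => h ω * L₁ ω + (1 - h ω) * L₀ ω)
    (hpos : 0 < ∫ ω, (h ω - sigmoid a) ^ 2 ∂μ)
    (Var : (Ω → ℝ) → ℝ)
    (hVar : ∀ X : Ω → ℝ, Var X = (∫ ω, (X ω) ^ 2 ∂μ) - (∫ ω, X ω ∂μ) ^ 2)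
    (Lstar : ℝ)
    (hLstar : Lstar = (∫ ω, (h ω - sigmoid a) ^ 2 * L ω ∂μ)
        / ∫ ω, (h ω - sigmoid a) ^ 2 ∂μ) :
    ∀ Lbar : ℝ,
      Var (fun ω => (h ω - sigmoid a) * (L ω - Lstar))
        ≤ Var (fun ω => (h ω - sigmoid a) * (L ω - Lbar)) := by
  intro Lbar
  set s : ℝ := sigmoid a with hsdef
  have hexp : 0 < Real.exp (-a) := Real.exp_pos _
  have hs0 : 0 < s := by
    rw [hsdef, sigmoid]; positivity
  have hs1 : s < 1 := by
    rw [hsdef, sigmoid]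
    rw [div_lt_one (by linarith)]
    linarith
  -- measurability of h
  have hmh : Measurable h := by
    rw [hh]
    exact Measurable.ite (measurableSet_lt hz measurable_const) measurable_const
      measurable_const
  have hh01 : ∀ ω, h ω = 0 ∨ h ω = 1 := by
    intro ω; rw [hh]; dsimp only; split <;> simp
  -- L is in L²
  have habs1 : ∀ ω, |h ω * L₁ ω| ≤ |L₁ ω| := by
    intro ω
    rcases hh01 ω with hω | hω <;> simp [hω, abs_nonneg]
  have habs0 : ∀ ω, |(1 - h ω) * L₀ ω| ≤ |L₀ ω| := by
    intro ω
    rcases hh01 ω with hω | hω <;> simp [hω, abs_nonneg]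
  have hM1 : MemLp (fun ω => h ω * L₁ ω) 2 μ :=
    MemLp.of_le hL₁ (hmh.aestronglyMeasurable.mul hL₁.aestronglyMeasurable)
      (Filter.Eventually.of_forall fun ω => by
        simpa only [Real.norm_eq_abs] using habs1 ω)
  have hM0 : MemLp (fun ω => (1 - h ω) * L₀ ω) 2 μ :=
    MemLp.of_le hL₀
      (((aestronglyMeasurable_const.sub hmh.aestronglyMeasurable)).mul
        hL₀.aestronglyMeasurable)
      (Filter.Eventually.of_forall fun ω => by
        simpa only [Real.norm_eq_abs] using habs0 ω)
  have hML : MemLp L 2 μ := by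
    rw [hL]; exact hM1.add hM0
  -- D = h - s
  set D : Ω → ℝ := fun ω => h ω - s with hDdef
  have hmD : Measurable D := hmh.sub measurable_const
  have hDbd : ∀ ω, |D ω| ≤ 1 := by
    intro ω
    rcases hh01 ω with hω | hω <;>
      · rw [abs_le]; constructor <;> simp [hDdef, hω] <;> linarith
  have hIh : Integrable h μ :=
    (integrable_const (1 : ℝ)).mono' hmh.aestronglyMeasurable
      (Filter.Eventually.of_forall fun ω => by
        rcases hh01 ω with hω | hω <;> simp [hω])
  have hID : Integrable D μ :=
    (integrable_const (1 : ℝ)).mono' hmD.aestronglyMeasurable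
      (Filter.Eventually.of_forall fun ω => by
        simpa [Real.norm_eq_abs] using hDbd ω)
  -- E[D] = 0
  have hED : ∫ ω, D ω ∂μ = 0 := by
    have hInd : h = Set.indicator {ω | z ω < s} (fun _ => (1 : ℝ)) := by
      rw [hh]; funext ω; simp [Set.indicator_apply, Set.mem_setOf_eq]
    have hset : {ω | z ω < s} = z ⁻¹' Set.Iio s := rfl
    have hmeas_set : MeasurableSet {ω | z ω < s} :=
      measurableSet_lt hz measurable_const
    have hμs : μ {ω | z ω < s} = ENNReal.ofReal s := by
      rw [hset, ← Measure.map_apply hz measurableSet_Iio, hunif,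
        Measure.restrict_apply measurableSet_Iio]
      have : Set.Iio s ∩ Set.Icc (0 : ℝ) 1 = Set.Ico 0 s := by
        ext x
        simp only [Set.mem_inter_iff, Set.mem_Iio, Set.mem_Icc, Set.mem_Ico]
        constructor
        · rintro ⟨hx, hx0, _⟩; exact ⟨hx0, hx⟩
        · rintro ⟨hx0, hx⟩; exact ⟨hx, hx0, le_of_lt (lt_trans hx hs1)⟩
      rw [this, Real.volume_Ico, sub_zero]
    have hInth : ∫ ω, h ω ∂μ = s := by
      rw [hInd, integral_indicator_const _ hmeas_set, measureReal_def, hμs,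
        ENNReal.toReal_ofReal hs0.le]
      simp
    have hdiff : ∫ ω, D ω ∂μ = (∫ ω, h ω ∂μ) - s := by
      have : ∫ ω, D ω ∂μ = ∫ ω, (h ω - s) ∂μ := rfl
      rw [this, integral_sub hIh (integrable_const s)]
      simp
    rw [hdiff, hInth, sub_self]
  -- integrability facts
  have hIL : Integrable L μ := hML.integrable one_le_two
  have hID2 : Integrable (fun ω => D ω ^ 2) μ :=
    (integrable_const (1 : ℝ)).mono' ((hmD.pow_const 2).aestronglyMeasurable)
      (Filter.Eventually.of_forall fun ω => by
        have := hDbd ω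
        rw [Real.norm_eq_abs, abs_pow]
        calc |D ω| ^ 2 ≤ 1 ^ 2 := pow_le_pow_left₀ (abs_nonneg _) this 2
          _ = 1 := one_pow 2)
  have hMY : MemLp (fun ω => D ω * (L ω - Lstar)) 2 μ := by
    have hsub : MemLp (fun ω => L ω - Lstar) 2 μ := hML.sub (memLp_const Lstar)
    refine MemLp.of_le hsub
      (hmD.aestronglyMeasurable.mul hsub.aestronglyMeasurable)
      (Filter.Eventually.of_forall fun ω => ?_)
    rw [Real.norm_eq_abs, Real.norm_eq_abs, abs_mul]
    calc |D ω| * |L ω - Lstar| ≤ 1 * |L ω - Lstar| :=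
          mul_le_mul_of_nonneg_right (hDbd ω) (abs_nonneg _)
      _ = |L ω - Lstar| := one_mul _
  set Y : Ω → ℝ := fun ω => D ω * (L ω - Lstar) with hYdef
  have hIY : Integrable Y μ := hMY.integrable one_le_two
  have hIY2 : Integrable (fun ω => Y ω ^ 2) μ := hMY.integrable_sq
  have hIYD : Integrable (fun ω => Y ω * D ω) μ :=
    hIY.abs.mono' (hIY.aestronglyMeasurable.mul hmD.aestronglyMeasurable)
      (Filter.Eventually.of_forall fun ω => by
        rw [Real.norm_eq_abs, abs_mul]
        calc |Y ω| * |D ω| ≤ |Y ω| * 1 :=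
              mul_le_mul_of_nonneg_left (hDbd ω) (abs_nonneg _)
          _ = |Y ω| := mul_one _)
  have hID2L : Integrable (fun ω => D ω ^ 2 * L ω) μ :=
    hIL.abs.mono'
      (((hmD.pow_const 2).aestronglyMeasurable).mul hIL.aestronglyMeasurable)
      (Filter.Eventually.of_forall fun ω => by
        rw [Real.norm_eq_abs, abs_mul]
        have h1 : |D ω ^ 2| ≤ 1 := by
          rw [abs_pow]
          calc |D ω| ^ 2 ≤ 1 ^ 2 := pow_le_pow_left₀ (abs_nonneg _) (hDbd ω) 2
            _ = 1 := one_pow 2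
        calc |D ω ^ 2| * |L ω| ≤ 1 * |L ω| :=
              mul_le_mul_of_nonneg_right h1 (abs_nonneg _)
          _ = |L ω| := one_mul _)
  -- E[Y D] = 0
  have hEYD : ∫ ω, Y ω * D ω ∂μ = 0 := by
    have heq : ∀ ω, Y ω * D ω = D ω ^ 2 * L ω - Lstar * D ω ^ 2 := by
      intro ω; simp only [hYdef]; ring
    have hne : (∫ ω, D ω ^ 2 ∂μ) ≠ 0 := ne_of_gt hpos
    calc ∫ ω, Y ω * D ω ∂μ
        = ∫ ω, (D ω ^ 2 * L ω - Lstar * D ω ^ 2) ∂μ :=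
          integral_congr_ae (Filter.Eventually.of_forall heq)
      _ = (∫ ω, D ω ^ 2 * L ω ∂μ) - Lstar * ∫ ω, D ω ^ 2 ∂μ := by
          rw [integral_sub hID2L (hID2.const_mul Lstar), integral_const_mul]
      _ = 0 := by
          rw [hLstar]
          have hne' : (∫ ω, (h ω - s) ^ 2 ∂μ) ≠ 0 := hne
          simp only [hDdef]
          rw [div_mul_cancel₀ _ hne', sub_self]
  -- main computation
  set t : ℝ := Lstar - Lbar with htdef
  have hexpand : (fun ω => (h ω - s) * (L ω - Lbar)) =
      fun ω => Y ω + t * D ω := by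
    funext ω; simp only [hYdef, hDdef, htdef]; ring
  have hexpand2 : (fun ω => (h ω - s) * (L ω - Lstar)) = Y := by
    funext ω; simp only [hYdef, hDdef]
  have had1 : Integrable (fun ω => Y ω ^ 2 + 2 * t * (Y ω * D ω)) μ := by
    exact hIY2.add (hIYD.const_mul (2 * t))
  have had2 : Integrable (fun ω => t ^ 2 * D ω ^ 2) μ := hID2.const_mul (t ^ 2)
  have hint_sq : ∫ ω, (Y ω + t * D ω) ^ 2 ∂μ =
      (∫ ω, Y ω ^ 2 ∂μ) + t ^ 2 * ∫ ω, D ω ^ 2 ∂μ := by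
    have hfe : (fun ω => (Y ω + t * D ω) ^ 2) =
        fun ω => (Y ω ^ 2 + 2 * t * (Y ω * D ω)) + t ^ 2 * D ω ^ 2 := by
      funext ω; ring
    rw [hfe, integral_add had1 had2,
      integral_add hIY2 (hIYD.const_mul (2 * t)),
      integral_const_mul, integral_const_mul, hEYD]
    ring
  have hint_lin : ∫ ω, (Y ω + t * D ω) ∂μ = ∫ ω, Y ω ∂μ := by
    rw [integral_add hIY (hID.const_mul t), integral_const_mul, hED]
    ring
  rw [hexpand, hVar, hVar]
  simp only [hint_sq, hint_lin]
  have hpos' : 0 < ∫ ω, D ω ^ 2 ∂μ := hpos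
  nlinarith [mul_nonneg (sq_nonneg t) hpos'.le]
end

section
/- Let (Ω, P) be a probability space, let z : Ω → ℝ be uniformly distributed on [0,1], let a ∈ ℝ, σ(a) = 1/(1 + exp(−a)), and h = 1_{z < σ(a)}. Let L₁, L₀ : Ω → ℝ be square-integrable random variables each independent of z, and set L = h·L₁ + (1 − h)·L₀ and ĝ = (h − σ(a))·L. Then the variance of the uncentered estimator satisfies Var[ĝ] = E[(h − σ(a))²·L²] − (σ(a)(1 − σ(a)))²·(E[L₁] − E[L₀])². -/
open MeasureTheory ProbabilityTheory

/-- With `z` uniform on `[0,1]`, `h = 1_{z < σ(a)}`, square-integrable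
losses `L₁, L₀` independent of `z`, `L = h·L₁ + (1 − h)·L₀` and `ĝ = (h − σ(a))·L`,
the variance of the uncentered estimator is
`Var[ĝ] = E[(h − σ(a))²·L²] − (σ(a)(1 − σ(a)))²·(E[L₁] − E[L₀])²`. -/
theorem stmt12 {Ω : Type*} [MeasurableSpace Ω] (μ : Measure Ω) [IsProbabilityMeasure μ]
    (z : Ω → ℝ) (hz : Measurable z)
    (hunif : Measure.map z μ = volume.restrict (Set.Icc (0 : ℝ) 1))
    (a : ℝ) (h : Ω → ℝ) (hh : h = fun ω => if z ω < sigmoid a then 1 else 0)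
    (L₁ L₀ : Ω → ℝ) (hL₁ : MemLp L₁ 2 μ) (hL₀ : MemLp L₀ 2 μ)
    (hind₁ : IndepFun L₁ z μ) (hind₀ : IndepFun L₀ z μ)
    (L : Ω → ℝ) (hL : L = fun ω => h ω * L₁ ω + (1 - h ω) * L₀ ω)
    (g : Ω → ℝ) (hg : g = fun ω => (h ω - sigmoid a) * L ω)
    (Var : (Ω → ℝ) → ℝ)
    (hVar : ∀ X : Ω → ℝ, Var X = (∫ ω, (X ω) ^ 2 ∂μ) - (∫ ω, X ω ∂μ) ^ 2) :
    Var g = (∫ ω, (h ω - sigmoid a) ^ 2 * (L ω) ^ 2 ∂μ)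
      - (sigmoid a * (1 - sigmoid a)) ^ 2
        * ((∫ ω, L₁ ω ∂μ) - ∫ ω, L₀ ω ∂μ) ^ 2 := by
  set s : ℝ := sigmoid a with hsdef
  have hs0 : 0 < s := by
    rw [hsdef]; unfold sigmoid; positivity
  have hs1 : s < 1 := by
    rw [hsdef]; unfold sigmoid
    rw [div_lt_one (by positivity)]
    linarith [Real.exp_pos (-a)]
  set E : Set Ω := z ⁻¹' Set.Iio s with hEdef
  have hEm : MeasurableSet E := hz measurableSet_Iio
  have hμE : μ E = ENNReal.ofReal s := by
    rw [hEdef, ← Measure.map_apply hz measurableSet_Iio, hunif,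
      Measure.restrict_apply measurableSet_Iio]
    have hset : Set.Iio s ∩ Set.Icc (0 : ℝ) 1 = Set.Ico 0 s := by
      ext x
      simp only [Set.mem_inter_iff, Set.mem_Iio, Set.mem_Icc, Set.mem_Ico]
      constructor
      · rintro ⟨h1, h2, _⟩; exact ⟨h2, h1⟩
      · rintro ⟨h1, h2⟩; exact ⟨h2, h1, le_trans h2.le hs1.le⟩
    rw [hset, Real.volume_Ico, sub_zero]
  have hh' : h = E.indicator (fun _ => (1 : ℝ)) := by
    funext ω
    rw [hh]
    by_cases hω : z ω < s <;> simp [Set.indicator, hEdef, hω]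
  -- integral of h
  have hEh : ∫ ω, h ω ∂μ = s := by
    rw [hh']
    have : ∫ ω, E.indicator (fun _ => (1:ℝ)) ω ∂μ = ∫ ω, E.indicator (1 : Ω → ℝ) ω ∂μ := rfl
    rw [this, integral_indicator_one hEm, measureReal_def, hμE, ENNReal.toReal_ofReal hs0.le]
  have hhInt : Integrable h μ := by
    rw [hh']
    exact (integrable_const (1 : ℝ)).indicator hEm
  have hE1h : ∫ ω, (1 - h ω) ∂μ = 1 - s := by
    rw [integral_sub (integrable_const 1) hhInt, hEh]
    simp
  -- independence of h and L₁, and of 1-h and L₀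
  have hφm : Measurable ((Set.Iio s).indicator (fun _ => (1 : ℝ))) :=
    measurable_const.indicator measurableSet_Iio
  have hcomp1 : (fun ω => h ω * L₁ ω)
      = (((Set.Iio s).indicator (fun _ => (1 : ℝ))) ∘ z) * L₁ := by
    funext ω
    rw [hh]
    by_cases hω : z ω < s <;> simp [Set.indicator, hω]
  have hcomp0 : (fun ω => (1 - h ω) * L₀ ω)
      = ((fun x => 1 - (Set.Iio s).indicator (fun _ => (1 : ℝ)) x) ∘ z) * L₀ := by
    funext ω
    rw [hh]
    by_cases hω : z ω < s <;> simp [Set.indicator, hω]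
  have hind1' : IndepFun (((Set.Iio s).indicator (fun _ => (1 : ℝ))) ∘ z) L₁ μ :=
    hind₁.symm.comp hφm measurable_id
  have hind0' : IndepFun ((fun x => 1 - (Set.Iio s).indicator (fun _ => (1 : ℝ)) x) ∘ z) L₀ μ :=
    hind₀.symm.comp (measurable_const.sub hφm) measurable_id
  have hL₁i : Integrable L₁ μ := hL₁.integrable one_le_two
  have hL₀i : Integrable L₀ μ := hL₀.integrable one_le_two
  have hmul1 : ∫ ω, h ω * L₁ ω ∂μ = s * ∫ ω, L₁ ω ∂μ := by
    rw [hcomp1, hind1'.integral_mul_eq_mul_integral (hφm.comp hz).aestronglyMeasurable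
      hL₁i.aestronglyMeasurable]
    have : (((Set.Iio s).indicator (fun _ => (1 : ℝ))) ∘ z) = h := by
      rw [hh']; funext ω; simp [Set.indicator, hEdef]
    rw [this, hEh]
  have hmul0 : ∫ ω, (1 - h ω) * L₀ ω ∂μ = (1 - s) * ∫ ω, L₀ ω ∂μ := by
    rw [hcomp0, hind0'.integral_mul_eq_mul_integral ((measurable_const.sub hφm).comp hz).aestronglyMeasurable
      hL₀i.aestronglyMeasurable]
    have : ((fun x => 1 - (Set.Iio s).indicator (fun _ => (1 : ℝ)) x) ∘ z)
        = fun ω => 1 - h ω := by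
      rw [hh']; funext ω; simp [Set.indicator, hEdef]
    rw [this, hE1h]
  -- integrability of pieces
  have hint1 : Integrable (fun ω => h ω * L₁ ω) μ := by
    have : (fun ω => h ω * L₁ ω) = E.indicator L₁ := by
      funext ω
      rw [hh]
      by_cases hω : z ω < s <;> simp [Set.indicator, hEdef, hω]
    rw [this]
    exact hL₁i.indicator hEm
  have hint0 : Integrable (fun ω => (1 - h ω) * L₀ ω) μ := by
    have : (fun ω => (1 - h ω) * L₀ ω) = fun ω => L₀ ω - E.indicator L₀ ω := by
      funext ω
      rw [hh]
      by_cases hω : z ω < s <;> simp [Set.indicator, hEdef, hω]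
    rw [this]
    exact hL₀i.sub (hL₀i.indicator hEm)
  -- decomposition of g
  have hgdec : g = fun ω => (1 - s) * (h ω * L₁ ω) - s * ((1 - h ω) * L₀ ω) := by
    funext ω
    rw [hg, hL, hh]
    by_cases hω : z ω < s <;> simp [hω] <;> ring
  have hEg : ∫ ω, g ω ∂μ = s * (1 - s) * ((∫ ω, L₁ ω ∂μ) - ∫ ω, L₀ ω ∂μ) := by
    rw [hgdec, integral_sub (hint1.const_mul _) (hint0.const_mul _),
      integral_const_mul, integral_const_mul, hmul1, hmul0]
    ring
  have hg2 : ∀ ω, (g ω) ^ 2 = (h ω - s) ^ 2 * (L ω) ^ 2 := by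
    intro ω; rw [hg]; ring
  rw [hVar, hEg]
  simp_rw [hg2]
  ring
end

section
/- Let (Ω, P) be a probability space, let z : Ω → ℝ be uniformly distributed on [0,1], let a ∈ ℝ, σ(a) = 1/(1 + exp(−a)), and h = 1_{z < σ(a)}. Let L₁, L₀ : Ω → ℝ be square-integrable random variables each independent of z, and set L = h·L₁ + (1 − h)·L₀. Then the covariance between h and L satisfies Cov[h, L] = E[(h − E[h])·(L − E[L])] = σ(a)(1 − σ(a))·(E[L₁] − E[L₀]); in particular the unbiased gradient estimator's expectation E[(h − σ(a))·L] equals the covariance between the stochastic binary decision h and the loss L. -/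
open MeasureTheory ProbabilityTheory

/-- With `z` uniform on `[0,1]`, `h = 1_{z < σ(a)}`, square-integrable
losses `L₁, L₀` independent of `z`, and `L = h·L₁ + (1 − h)·L₀`, the covariance
between `h` and `L` satisfies
`Cov[h, L] = E[(h − E[h])·(L − E[L])] = σ(a)(1 − σ(a))·(E[L₁] − E[L₀])`,
and the unbiased estimator's expectation `E[(h − σ(a))·L]` equals this covariance. -/
theorem stmt13 {Ω : Type*} [MeasurableSpace Ω] (μ : Measure Ω) [IsProbabilityMeasure μ]
    (z : Ω → ℝ) (hz : Measurable z)
    (hunif : Measure.map z μ = volume.restrict (Set.Icc (0 : ℝ) 1))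
    (a : ℝ) (h : Ω → ℝ) (hh : h = fun ω => if z ω < sigmoid a then 1 else 0)
    (L₁ L₀ : Ω → ℝ) (hL₁ : MemLp L₁ 2 μ) (hL₀ : MemLp L₀ 2 μ)
    (hind₁ : IndepFun L₁ z μ) (hind₀ : IndepFun L₀ z μ)
    (L : Ω → ℝ) (hL : L = fun ω => h ω * L₁ ω + (1 - h ω) * L₀ ω) :
    (∫ ω, (h ω - ∫ ω', h ω' ∂μ) * (L ω - ∫ ω', L ω' ∂μ) ∂μ)
        = sigmoid a * (1 - sigmoid a) * ((∫ ω, L₁ ω ∂μ) - ∫ ω, L₀ ω ∂μ) ∧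
    (∫ ω, (h ω - sigmoid a) * L ω ∂μ)
        = ∫ ω, (h ω - ∫ ω', h ω' ∂μ) * (L ω - ∫ ω', L ω' ∂μ) ∂μ := by
  set s := sigmoid a with hsdef
  have hexp : 0 < Real.exp (-a) := Real.exp_pos _
  have hs0 : 0 < s := by
    rw [hsdef, sigmoid]; positivity
  have hs1 : s < 1 := by
    rw [hsdef, sigmoid]
    rw [div_lt_one (by linarith)]; linarith
  -- g : ℝ → ℝ, h = g ∘ z
  set g : ℝ → ℝ := fun t => if t < s then 1 else 0 with hgdef
  have hgm : Measurable g := by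
    apply Measurable.ite (measurableSet_lt measurable_id measurable_const) <;> measurability
  have hhg : h = g ∘ z := by rw [hh]; rfl
  have hhm : Measurable h := by rw [hhg]; exact hgm.comp hz
  have hhbd : ∀ ω, h ω = 0 ∨ h ω = 1 := by
    intro ω; rw [hh]; dsimp only; split <;> simp
  -- integrability
  have hI1 : Integrable L₁ μ := hL₁.integrable (by norm_num)
  have hI0 : Integrable L₀ μ := hL₀.integrable (by norm_num)
  have hIh : Integrable h μ := by
    apply (integrable_const (1:ℝ)).mono' hhm.aestronglyMeasurable
    filter_upwards with ω
    rcases hhbd ω with h0 | h0 <;> simp [h0]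
  have hIhL₁ : Integrable (fun ω => h ω * L₁ ω) μ := by
    have := hI1.bdd_mul (c := 1) hhm.aestronglyMeasurable (ae_of_all _ fun ω => by
      rcases hhbd ω with h0 | h0 <;> simp [h0])
    exact this
  have hIhL₀ : Integrable (fun ω => h ω * L₀ ω) μ := by
    have := hI0.bdd_mul (c := 1) hhm.aestronglyMeasurable (ae_of_all _ fun ω => by
      rcases hhbd ω with h0 | h0 <;> simp [h0])
    exact this
  -- E[h] = s
  have hEh : (∫ ω, h ω ∂μ) = s := by
    have hset : {ω | z ω < s} = z ⁻¹' (Set.Iio s) := rfl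
    have : h = Set.indicator (z ⁻¹' (Set.Iio s)) (fun _ => (1:ℝ)) := by
      funext ω; rw [hh]
      simp [Set.indicator, Set.mem_preimage, Set.mem_Iio]
    rw [this, integral_indicator_const _ (hz measurableSet_Iio)]
    have hmap : μ (z ⁻¹' Set.Iio s) = Measure.map z μ (Set.Iio s) :=
      (Measure.map_apply hz measurableSet_Iio).symm
    rw [smul_eq_mul, mul_one, measureReal_def, hmap, hunif, Measure.restrict_apply measurableSet_Iio]
    have : Set.Iio s ∩ Set.Icc (0:ℝ) 1 = Set.Ico 0 s := by
      ext t; simp only [Set.mem_inter_iff, Set.mem_Iio, Set.mem_Icc, Set.mem_Ico]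
      constructor
      · rintro ⟨h1, h2, h3⟩; exact ⟨h2, h1⟩
      · rintro ⟨h1, h2⟩; exact ⟨h2, h1, by linarith⟩
    rw [this, Real.volume_Ico, ENNReal.toReal_ofReal (by linarith)]
    ring
  -- independence transferred to h
  have hind₁' : IndepFun h L₁ μ := by
    rw [hhg]; exact (hind₁.comp measurable_id hgm).symm
  have hind₀' : IndepFun h L₀ μ := by
    rw [hhg]; exact (hind₀.comp measurable_id hgm).symm
  have hEhL₁ : (∫ ω, h ω * L₁ ω ∂μ) = s * ∫ ω, L₁ ω ∂μ := by
    have := hind₁'.integral_mul_eq_mul_integral hIh.aestronglyMeasurable hI1.aestronglyMeasurable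
    simpa [Pi.mul_apply, hEh] using this
  have hEhL₀ : (∫ ω, h ω * L₀ ω ∂μ) = s * ∫ ω, L₀ ω ∂μ := by
    have := hind₀'.integral_mul_eq_mul_integral hIh.aestronglyMeasurable hI0.aestronglyMeasurable
    simpa [Pi.mul_apply, hEh] using this
  set m1 := ∫ ω, L₁ ω ∂μ with hm1
  set m0 := ∫ ω, L₀ ω ∂μ with hm0
  -- integrability of L
  have hIL : Integrable L μ := by
    rw [hL]
    apply Integrable.add hIhL₁
    have : (fun ω => (1 - h ω) * L₀ ω) = fun ω => L₀ ω - h ω * L₀ ω := by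
      funext ω; ring
    rw [this]; exact hI0.sub hIhL₀
  -- E[L]
  have hEL : (∫ ω, L ω ∂μ) = s * m1 + (1 - s) * m0 := by
    rw [hL]
    have heq : (fun ω => h ω * L₁ ω + (1 - h ω) * L₀ ω)
        = fun ω => (h ω * L₁ ω) + (L₀ ω - h ω * L₀ ω) := by funext ω; ring
    have hI0' : Integrable (fun ω => L₀ ω - h ω * L₀ ω) μ := hI0.sub hIhL₀
    rw [heq, integral_add hIhL₁ hI0', integral_sub hI0 hIhL₀, hEhL₁, hEhL₀]
    ring
  -- h * L = h * L₁
  have hhL : ∀ ω, h ω * L ω = h ω * L₁ ω := by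
    intro ω; rw [hL]
    rcases hhbd ω with h0 | h0 <;> simp [h0]
  have hEhL : (∫ ω, h ω * L ω ∂μ) = s * m1 := by
    rw [show (fun ω => h ω * L ω) = fun ω => h ω * L₁ ω from funext hhL, hEhL₁]
  set EL := ∫ ω, L ω ∂μ with hELdef
  have hIhL : Integrable (fun ω => h ω * L ω) μ := by
    rw [show (fun ω => h ω * L ω) = fun ω => h ω * L₁ ω from funext hhL]; exact hIhL₁
  have hcov : (∫ ω, (h ω - ∫ ω', h ω' ∂μ) * (L ω - ∫ ω', L ω' ∂μ) ∂μ)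
      = s * m1 - s * EL := by
    have heq : (fun ω => (h ω - ∫ ω', h ω' ∂μ) * (L ω - ∫ ω', L ω' ∂μ))
        = fun ω => (h ω * L ω - EL * h ω) - (s * L ω - s * EL) := by
      funext ω; rw [hEh, ← hELdef]; ring
    have i1 : Integrable (fun ω => EL * h ω) μ := hIh.const_mul EL
    have i2 : Integrable (fun ω => s * L ω) μ := hIL.const_mul s
    have i3 : Integrable (fun ω => h ω * L ω - EL * h ω) μ := hIhL.sub i1
    have i4 : Integrable (fun ω => s * L ω - s * EL) μ := i2.sub (integrable_const (s * EL))
    rw [heq, integral_sub i3 i4, integral_sub hIhL i1,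
      integral_sub i2 (integrable_const (s * EL)),
      integral_const_mul, integral_const_mul, integral_const, hEhL, hEh]
    simp only [measure_univ, probReal_univ, ENNReal.toReal_one, smul_eq_mul, one_mul, ← hELdef]
    ring
  constructor
  · rw [hcov, hEL]; ring
  · have heq2 : (fun ω => (h ω - s) * L ω) = fun ω => h ω * L ω - s * L ω := by
      funext ω; ring
    rw [heq2, integral_sub hIhL (hIL.const_mul s), integral_const_mul, hEhL, hcov]
end
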